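/- For a Gumbel random variable Y with location μ and scale σ > 0, for any x ∈ ℝ and k ∈ ℕ, the truncated moment E[Y^k · 1{Y ≤ x}] equals Σ_{i=0}^{k} C(k,i) μ^{k−i} σ^i · I(i; exp(−(x−μ)/σ), +∞), where I(i; a, +∞) = (−1)^i ∫_a^∞ (ln v)^i e^{−v} dv. -/

import Mathlib

open MeasureTheory Real Finset

/-- The Gumbel density with location `μ` and scale `σ`. -/
noncomputable def gumbelPDF (μ σ x : ℝ) : ℝ :=
  (1 / σ) * Real.exp (-((x - μ) / σ) - Real.exp (-((x - μ) / σ)))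

/-- Incomplete moment `I(k; a, ∞) = (−1)^k ∫_a^∞ (ln v)^k e^{−v} dv`. -/
noncomputable def Iinc (k : ℕ) (a : ℝ) : ℝ :=
  (-1 : ℝ) ^ k * ∫ v in Set.Ioi a, (Real.log v) ^ k * Real.exp (-v)

lemma integ_log_pow_exp (i : ℕ) {a : ℝ} (ha : 0 < a) :
    IntegrableOn (fun v => (Real.log v) ^ i * Real.exp (-v)) (Set.Ioi a) := by
  apply integrable_of_isBigO_exp_neg (b := 1/2) one_half_pos
  · apply ContinuousOn.mul
    · exact (Real.continuousOn_log.mono (fun v hv => by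
        simp only [Set.mem_compl_iff, Set.mem_singleton_iff]
        exact ne_of_gt (lt_of_lt_of_le ha hv))).pow i
    · exact (Real.continuous_exp.comp continuous_neg).continuousOn
  · have h1 : (fun v : ℝ => (Real.log v) ^ i) =O[Filter.atTop] fun v => v ^ i := by
      apply Asymptotics.IsBigO.of_bound 1
      filter_upwards [Filter.eventually_ge_atTop (1 : ℝ)] with v hv
      have h0 : 0 ≤ Real.log v := Real.log_nonneg hv
      have hlog : Real.log v ≤ v := (Real.log_le_sub_one_of_pos (by linarith)).trans (by linarith)
      simp only [Real.norm_eq_abs, one_mul]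
      rw [abs_of_nonneg (pow_nonneg h0 i), abs_of_nonneg (pow_nonneg (by linarith : (0:ℝ) ≤ v) i)]
      exact pow_le_pow_left₀ h0 hlog i
    have h2 : (fun v : ℝ => v ^ i) =O[Filter.atTop] fun v => Real.exp ((1/2) * v) :=
      (isLittleO_pow_exp_pos_mul_atTop i one_half_pos).isBigO
    have h3 := (h1.trans h2).mul (Asymptotics.isBigO_refl (fun v : ℝ => Real.exp (-v))
      Filter.atTop)
    refine h3.trans (Asymptotics.isBigO_of_le _ fun v => ?_)
    rw [← Real.exp_add]
    ring_nf
    exact le_rfl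

theorem gumbel_truncated_moment
    (μ σ : ℝ) (hσ : 0 < σ) (x : ℝ) (k : ℕ) :
    ∫ y in Set.Iic x, y ^ k * gumbelPDF μ σ y
      = ∑ i ∈ Finset.range (k + 1),
          (k.choose i : ℝ) * μ ^ (k - i) * σ ^ i *
            Iinc i (Real.exp (-((x - μ) / σ))) := by
  set a : ℝ := Real.exp (-((x - μ) / σ)) with ha_def
  have ha : 0 < a := Real.exp_pos _
  have hσ' : σ ≠ 0 := ne_of_gt hσ
  -- the substitution map
  set g : ℝ → ℝ := fun v => μ - σ * Real.log v with hg_def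
  have himg : g '' Set.Ioi a = Set.Iio x := by
    ext y
    constructor
    · rintro ⟨v, hv, rfl⟩
      have hv' : a < v := hv
      have : Real.log a < Real.log v := Real.log_lt_log ha hv'
      rw [ha_def, Real.log_exp] at this
      have h2 := mul_lt_mul_of_pos_left this hσ
      have h3 : σ * -((x - μ) / σ) = -(x - μ) := by field_simp
      rw [h3] at h2
      simp only [hg_def, Set.mem_Iio]
      linarith
    · intro hy
      refine ⟨Real.exp ((μ - y) / σ), ?_, ?_⟩
      · rw [Set.mem_Ioi, ha_def]
        apply Real.exp_lt_exp.mpr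
        rw [Set.mem_Iio] at hy
        rw [← neg_div, div_lt_div_iff₀ hσ hσ]
        nlinarith
      · simp only [hg_def, Real.log_exp]
        field_simp
        ring
  have hderiv : ∀ v ∈ Set.Ioi a, HasDerivWithinAt g (-σ / v) (Set.Ioi a) v := by
    intro v hv
    have hv0 : v ≠ 0 := ne_of_gt (lt_trans ha hv)
    have := ((Real.hasDerivAt_log hv0).const_mul σ).const_sub μ
    rw [neg_div, div_eq_mul_inv]
    exact this.hasDerivWithinAt
  have hinj : Set.InjOn g (Set.Ioi a) := by
    intro u hu v hv huv
    have hu0 : 0 < u := lt_trans ha hu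
    have hv0 : 0 < v := lt_trans ha hv
    simp only [hg_def] at huv
    have h2 : σ * Real.log u = σ * Real.log v := by linarith
    have : Real.log u = Real.log v := mul_left_cancel₀ hσ' h2
    exact Real.log_injOn_pos (Set.mem_Ioi.mpr hu0) (Set.mem_Ioi.mpr hv0) this
  rw [integral_Iic_eq_integral_Iio, ← himg,
    integral_image_eq_integral_abs_deriv_smul measurableSet_Ioi hderiv hinj]
  have hpt : ∀ v ∈ Set.Ioi a,
      |(-σ / v)| • ((g v) ^ k * gumbelPDF μ σ (g v))
        = ∑ i ∈ Finset.range (k + 1),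
            (-(σ * Real.log v)) ^ i * μ ^ (k - i) * (k.choose i : ℝ) * Real.exp (-v) := by
    intro v hv
    have hv0 : 0 < v := lt_trans ha hv
    have habs : |(-σ / v)| = σ / v := by
      rw [abs_div, abs_neg, abs_of_pos hσ, abs_of_pos hv0]
    have hpdf : gumbelPDF μ σ (g v) = (1 / σ) * (v * Real.exp (-v)) := by
      simp only [gumbelPDF, hg_def]
      have h1 : -((μ - σ * Real.log v - μ) / σ) = Real.log v := by field_simp; ring
      rw [h1, Real.exp_log hv0, Real.exp_sub, Real.exp_log hv0, Real.exp_neg]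
      ring
    have hexpand : (g v) ^ k
        = ∑ i ∈ Finset.range (k + 1), (-(σ * Real.log v)) ^ i * μ ^ (k - i) * (k.choose i : ℝ) := by
      have : g v = (-(σ * Real.log v)) + μ := by simp [hg_def]; ring
      rw [this, add_pow]
    rw [smul_eq_mul, habs, hpdf, hexpand, Finset.sum_mul, Finset.mul_sum]
    apply Finset.sum_congr rfl
    intro i _
    field_simp
  rw [setIntegral_congr_fun measurableSet_Ioi hpt]
  have hint : ∀ i ∈ Finset.range (k + 1), IntegrableOn
      (fun v => (-(σ * Real.log v)) ^ i * μ ^ (k - i) * (k.choose i : ℝ) * Real.exp (-v))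
      (Set.Ioi a) := by
    intro i _
    have h := ((integ_log_pow_exp i ha).const_mul ((-σ) ^ i * μ ^ (k - i) * (k.choose i : ℝ)))
    refine IntegrableOn.congr_fun h (fun v _ => ?_) measurableSet_Ioi
    show _ = _
    rw [show -(σ * Real.log v) = (-1) * σ * Real.log v from by ring, mul_pow, mul_pow]
    ring
  rw [integral_finset_sum _ hint]
  apply Finset.sum_congr rfl
  intro i _
  have : ∀ v : ℝ, (-(σ * Real.log v)) ^ i * μ ^ (k - i) * (k.choose i : ℝ) * Real.exp (-v)
      = ((-1 : ℝ) ^ i * σ ^ i * μ ^ (k - i) * (k.choose i : ℝ)) *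
        ((Real.log v) ^ i * Real.exp (-v)) := by
    intro v
    rw [neg_pow, mul_pow]
    ring
  simp_rw [this]
  rw [MeasureTheory.integral_const_mul, Iinc]
  ring
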